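/- Let n, k be integers with n ≥ 1 and 1 ≤ k ≤ n, let G be a finite simple graph with vertex set {v_1,…,v_n}, and let G′ be the dominating-set reduction graph of (G,k). Then G′ is chordal, and there exists a tree whose vertex set is exactly the set of maximal cliques of G′, which satisfies the clique-intersection property, and in which every vertex has degree at most 4. -/

import Mathlib

/-- An independent set of a graph, as a finset of pairwise non-adjacent vertices. -/
def IsIndepF {V : Type*} (H : SimpleGraph V) (I : Finset V) : Prop :=
  ∀ u ∈ I, ∀ v ∈ I, ¬ H.Adj u v

/-- A graph is chordal if it has no induced cycle of length at least four. -/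
def Chordal {V : Type*} (H : SimpleGraph V) : Prop :=
  ∀ m : ℕ, 4 ≤ m → IsEmpty (SimpleGraph.cycleGraph m ↪g H)

/-- A maximal clique of a graph, as a finset. -/
def IsMaxClique {V : Type*} (H : SimpleGraph V) (K : Finset V) : Prop :=
  H.IsClique (K : Set V) ∧ ∀ K' : Finset V, H.IsClique (K' : Set V) → K ⊆ K' → K' = K

/-- Vertices of the dominating-set reduction graph: `C` has `n+k+1` vertices,
`W`, `X`, `Y` have `n+k+2` vertices each. -/
inductive RVert (n k : ℕ) : Type where
  | c : Fin (n + k + 1) → RVert n k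
  | w : Fin (n + k + 2) → RVert n k
  | x : Fin (n + k + 2) → RVert n k
  | y : Fin (n + k + 2) → RVert n k
deriving DecidableEq

/-- The dominating-set reduction graph `G'` of `(G, k)`.  (Indices are 0-based:
`RVert.c i` with `i : Fin (n+k+1)` is the vertex `c_{i+1}`, etc.) -/
def redGraph (n k : ℕ) (G : SimpleGraph (Fin n)) : SimpleGraph (RVert n k) :=
  SimpleGraph.fromRel (fun a b =>
    match a, b with
    | .c i, .c j => i ≠ j
    | .c i, .w j =>
        (∃ (hi : i.val < n) (hj : j.val < n), G.Adj ⟨i.val, hi⟩ ⟨j.val, hj⟩)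
        ∨ (i.val = j.val)
        ∨ (i.val < n ∧ j.val = n + k + 1)
    | .x i, .y j => i = j
    | .x _, .c _ => True
    | _, _ => False)

/-- The tree `T` on the maximal cliques of `H` satisfies the clique-intersection
property: for all maximal cliques `K`, `K'`, the set `K ∩ K'` is contained in every
maximal clique on the path between `K` and `K'` in `T`. -/
def CliqueIntersectionProperty {V : Type*} [DecidableEq V] (H : SimpleGraph V)
    (T : SimpleGraph {K : Finset V // IsMaxClique H K}) : Prop :=
  ∀ (K K' : {K : Finset V // IsMaxClique H K}) (p : T.Walk K K'), p.IsPath →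
    ∀ L ∈ p.support, K.1 ∩ K'.1 ⊆ L.1

/-! ### Auxiliary material -/

open SimpleGraph

section ParentTree
variable {V : Type*} (p : V → V) (root : V) (r : V → ℕ)

/-- The graph generated by a parent function. -/
def parentGraph : SimpleGraph V := SimpleGraph.fromRel (fun a b => p a = b)

lemma parentGraph_adj {a b : V} : (parentGraph p).Adj a b ↔ a ≠ b ∧ (p a = b ∨ p b = a) := by
  simp [parentGraph, SimpleGraph.fromRel_adj]

variable (hroot : p root = root) (hr : ∀ v, v ≠ root → r (p v) < r v)
include hroot hr

omit hroot in
lemma parentGraph_reach (v : V) : (parentGraph p).Reachable v root := by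
  have key : ∀ (m : ℕ) (v : V), r v ≤ m → (parentGraph p).Reachable v root := by
    intro m
    induction m with
    | zero =>
      intro v hv
      by_cases h : v = root
      · exact h ▸ Reachable.refl _
      · exact absurd (lt_of_lt_of_le (hr v h) hv) (Nat.not_lt_zero _)
    | succ m ih =>
      intro v hv
      by_cases h : v = root
      · exact h ▸ Reachable.refl _
      · have hlt := hr v h
        have hadj : (parentGraph p).Adj v (p v) := by
          rw [parentGraph_adj]
          refine ⟨fun he => ?_, Or.inl rfl⟩
          · rw [← he] at hlt; exact lt_irrefl _ hlt
        exact hadj.reachable.trans (ih (p v) (by omega))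
  exact key (r v) v le_rfl

omit hroot in
lemma parentGraph_connected : (parentGraph p).Connected := by
  rw [connected_iff]
  refine ⟨fun u v => ?_, ⟨root⟩⟩
  exact (parentGraph_reach p root r hr u).trans (parentGraph_reach p root r hr v).symm

lemma parentGraph_acyclic : (parentGraph p).IsAcyclic := by
  classical
  intro v c hc
  obtain ⟨u, hu, hmax⟩ := Finset.exists_max_image c.support.toFinset r
    ⟨v, by simp [c.start_mem_support]⟩
  rw [List.mem_toFinset] at hu
  have hmax' : ∀ x ∈ c.support, r x ≤ r u := fun x hx => hmax x (List.mem_toFinset.2 hx)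
  have hc' : (c.rotate u hu).IsCycle := hc.rotate hu
  have hsupp : ∀ x ∈ (c.rotate u hu).support.tail, x ∈ c.support := by
    intro x hx
    exact List.mem_of_mem_tail ((Walk.support_rotate c u hu).mem_iff.mp hx)
  obtain ⟨b, h, q, hq⟩ := Walk.not_nil_iff.mp hc'.not_nil
  rw [hq] at hc' hsupp
  rw [Walk.cons_isCycle_iff] at hc'
  have hqsupp : ∀ x ∈ q.support, x ∈ c.support := by
    intro x hx
    exact hsupp x (by simpa using hx)
  have h3 : 3 ≤ (Walk.cons h q).length := by rw [← hq]; exact (hc.rotate hu).three_le_length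
  have hqrev : q.reverse.IsPath := hc'.1.reverse
  obtain ⟨a, h2, q2, hq2⟩ := Walk.not_nil_iff.mp (Walk.not_nil_of_ne h.ne (p := q.reverse))
  have ha : a ∈ q.support := by
    have : a ∈ q.reverse.support := by rw [hq2]; simp [Walk.start_mem_support]
    simpa using this
  have hab : a ≠ b := by
    intro hab
    subst hab
    rw [hq2] at hqrev
    rw [Walk.cons_isPath_iff] at hqrev
    have hq2nil : q2 = Walk.nil := (Walk.isPath_iff_eq_nil (p := q2)).mp hqrev.1
    have hlen : q.reverse.length = 1 := by rw [hq2, hq2nil]; simp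
    rw [Walk.length_reverse] at hlen
    simp [hlen] at h3
  have hra : r a ≤ r u := hmax' a (hqsupp a ha)
  have hrb : r b ≤ r u := hmax' b (hqsupp b q.start_mem_support)
  have key : ∀ z, (parentGraph p).Adj u z → r z ≤ r u → p u = z := by
    intro z hz hrz
    rw [parentGraph_adj] at hz
    rcases hz.2 with h' | h'
    · exact h'
    · exfalso
      have hzroot : z ≠ root := by
        intro hzr
        rw [hzr, hroot] at h'
        exact hz.1 (h'.symm.trans hzr.symm)
      have := hr z hzroot
      rw [h'] at this
      omega
  have e1 := key b h hrb
  have e2 := key a h2 hra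
  exact hab (e2 ▸ e1 ▸ rfl)

lemma parentGraph_isTree : (parentGraph p).IsTree :=
  ⟨parentGraph_connected p root r hr, parentGraph_acyclic p root r hroot hr⟩

end ParentTree

section PathFacts
variable {V : Type*} {T : SimpleGraph V}

lemma leaf_mem_path_support {a b : V} (p : T.Walk a b) (hp : p.IsPath) {L : V}
    (hL : L ∈ p.support) (hleaf : ∀ u u', T.Adj L u → T.Adj L u' → u = u') :
    L = a ∨ L = b := by
  induction p with
  | nil => left; simpa using hL
  | @cons a a₁ b h q ih =>
    rw [Walk.cons_isPath_iff] at hp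
    rcases (by simpa using hL : L = a ∨ L ∈ q.support) with rfl | hLq
    · exact Or.inl rfl
    · rcases ih hp.1 hLq with rfl | rfl
      · cases q with
        | nil => exact Or.inr rfl
        | @cons _ a₂ _ h₂ q₂ =>
          exfalso
          have : a = a₂ := hleaf a a₂ h.symm h₂
          exact hp.2 (by rw [this]; simp [Walk.start_mem_support])
      · exact Or.inr rfl

lemma path_to_adj_leaf {a b : V} (p : T.Walk a b) (hp : p.IsPath) (hab : a ≠ b)
    (hleaf : ∀ u, T.Adj b u → u = a) :
    ∀ L ∈ p.support, L = a ∨ L = b := by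
  have hrev : p.reverse.IsPath := hp.reverse
  obtain ⟨u, h, q, hq⟩ := Walk.not_nil_iff.mp (Walk.not_nil_of_ne (Ne.symm hab) (p := p.reverse))
  have hu : u = a := hleaf u h
  subst hu
  rw [hq, Walk.cons_isPath_iff] at hrev
  have hnil : q = Walk.nil := (Walk.isPath_iff_eq_nil (p := q)).mp hrev.1
  subst hnil
  intro L hL
  have h1 : L ∈ p.reverse.support := by simpa using hL
  rw [hq] at h1
  simp at h1
  tauto

end PathFacts

namespace DSR
variable {n k : ℕ} {G : SimpleGraph (Fin n)}

/-- The condition for `c i ~ w j`. -/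
def wrel (n : ℕ) (G : SimpleGraph (Fin n)) (k : ℕ) (i : Fin (n + k + 1)) (j : Fin (n + k + 2)) : Prop :=
  (∃ (hi : i.val < n) (hj : j.val < n), G.Adj ⟨i.val, hi⟩ ⟨j.val, hj⟩)
  ∨ (i.val = j.val) ∨ (i.val < n ∧ j.val = n + k + 1)

lemma adj_cc {i j : Fin (n+k+1)} : (redGraph n k G).Adj (.c i) (.c j) ↔ i ≠ j := by
  simp only [redGraph, SimpleGraph.fromRel_adj]
  constructor
  · rintro ⟨h, h1 | h1⟩
    · exact h1
    · exact h1.symm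
  · intro h; exact ⟨by simpa using h, Or.inl h⟩

lemma adj_xc {i : Fin (n+k+2)} {j : Fin (n+k+1)} : (redGraph n k G).Adj (.x i) (.c j) := by
  simp only [redGraph, SimpleGraph.fromRel_adj]
  exact ⟨by simp, Or.inl trivial⟩

lemma adj_xy {i : Fin (n+k+2)} : (redGraph n k G).Adj (.x i) (.y i) := by
  simp only [redGraph, SimpleGraph.fromRel_adj]
  refine ⟨by simp, Or.inl ?_⟩
  simp

lemma adj_cw {i : Fin (n+k+1)} {j : Fin (n+k+2)} (h : wrel n G k i j) :
    (redGraph n k G).Adj (.c i) (.w j) := by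
  simp only [redGraph, SimpleGraph.fromRel_adj]
  exact ⟨by simp, Or.inl h⟩

lemma adj_to_y {u : RVert n k} {a : Fin (n+k+2)} :
    (redGraph n k G).Adj u (.y a) ↔ u = .x a := by
  simp only [redGraph, SimpleGraph.fromRel_adj]
  cases u <;> simp_all [eq_comm]

lemma adj_to_x {u : RVert n k} {a : Fin (n+k+2)} :
    (redGraph n k G).Adj u (.x a) ↔ u = .y a ∨ ∃ j, u = .c j := by
  simp only [redGraph, SimpleGraph.fromRel_adj]
  cases u <;> simp_all [eq_comm]

lemma adj_to_w {u : RVert n k} {a : Fin (n+k+2)} :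
    (redGraph n k G).Adj u (.w a) ↔ ∃ i, u = .c i ∧ wrel n G k i a := by
  simp only [redGraph, SimpleGraph.fromRel_adj, wrel]
  cases u <;> simp_all

/-! ### Maximal cliques -/

/-- The finset of all `c` vertices. -/
def Cset (n k : ℕ) : Finset (RVert n k) := Finset.univ.image RVert.c

/-- Maximal clique of type `A`: all of `C` plus one `x`. -/
def A (n k : ℕ) (i : Fin (n+k+2)) : Finset (RVert n k) := insert (.x i) (Cset n k)

/-- Maximal clique of type `B`: an `x`-`y` pair. -/
def B (n k : ℕ) (i : Fin (n+k+2)) : Finset (RVert n k) := {.x i, .y i}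

open Classical in
/-- Maximal clique of type `D`: a `w` vertex plus its neighborhood in `C`. -/
noncomputable def D (n k : ℕ) (G : SimpleGraph (Fin n)) (j : Fin (n+k+2)) : Finset (RVert n k) :=
  insert (.w j) ((Finset.univ.filter fun i => wrel n G k i j).image RVert.c)

lemma mem_Cset {u : RVert n k} : u ∈ Cset n k ↔ ∃ i, u = .c i := by
  simp [Cset, eq_comm]

lemma mem_A {u : RVert n k} {i : Fin (n+k+2)} :
    u ∈ A n k i ↔ u = .x i ∨ ∃ j, u = .c j := by
  simp [A, mem_Cset]

lemma mem_B {u : RVert n k} {i : Fin (n+k+2)} :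
    u ∈ B n k i ↔ u = .x i ∨ u = .y i := by
  simp [B]

lemma mem_D {u : RVert n k} {j : Fin (n+k+2)} :
    u ∈ D n k G j ↔ u = .w j ∨ ∃ i, u = .c i ∧ wrel n G k i j := by
  simp only [D, Finset.mem_insert, Finset.mem_image, Finset.mem_filter, Finset.mem_univ,
    true_and]
  constructor
  · rintro (h | ⟨i, hi, rfl⟩)
    · exact Or.inl h
    · exact Or.inr ⟨i, rfl, hi⟩
  · rintro (h | ⟨i, rfl, hi⟩)
    · exact Or.inl h
    · exact Or.inr ⟨i, hi, rfl⟩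

lemma clique_A (i : Fin (n+k+2)) : (redGraph n k G).IsClique (A n k i : Set (RVert n k)) := by
  intro a ha b hb hab
  rw [Finset.mem_coe, mem_A] at ha hb
  rcases ha with rfl | ⟨ja, rfl⟩ <;> rcases hb with rfl | ⟨jb, rfl⟩
  · exact absurd rfl hab
  · exact adj_xc
  · exact adj_xc.symm
  · exact adj_cc.mpr (by simpa using hab)

lemma clique_B (i : Fin (n+k+2)) : (redGraph n k G).IsClique (B n k i : Set (RVert n k)) := by
  intro a ha b hb hab
  rw [Finset.mem_coe, mem_B] at ha hb
  rcases ha with rfl | rfl <;> rcases hb with rfl | rfl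
  · exact absurd rfl hab
  · exact adj_xy
  · exact adj_xy.symm
  · exact absurd rfl hab

lemma clique_D (j : Fin (n+k+2)) : (redGraph n k G).IsClique (D n k G j : Set (RVert n k)) := by
  intro a ha b hb hab
  rw [Finset.mem_coe, mem_D] at ha hb
  rcases ha with rfl | ⟨ia, rfl, hia⟩ <;> rcases hb with rfl | ⟨ib, rfl, hib⟩
  · exact absurd rfl hab
  · exact (adj_cw hib).symm
  · exact adj_cw hia
  · exact adj_cc.mpr (by simpa using hab)

lemma maxA (i : Fin (n+k+2)) : IsMaxClique (redGraph n k G) (A n k i) := by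
  refine ⟨clique_A i, fun K' hK' hsub => ?_⟩
  refine Finset.Subset.antisymm ?_ hsub
  intro u hu
  rw [mem_A]
  by_cases hux : u = .x i
  · exact Or.inl hux
  have hxi : (RVert.x i : RVert n k) ∈ K' := hsub (by rw [mem_A]; exact Or.inl rfl)
  have hadj : (redGraph n k G).Adj u (.x i) := hK' hu hxi hux
  rcases adj_to_x.mp hadj with rfl | hc
  · -- u = y i : impossible since y i is not adjacent to c 0 ∈ K'
    exfalso
    have hc0 : (RVert.c 0 : RVert n k) ∈ K' := hsub (by rw [mem_A]; exact Or.inr ⟨0, rfl⟩)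
    have : (redGraph n k G).Adj (.c 0) (.y i) := (hK' hu hc0 (by simp)).symm
    rw [adj_to_y] at this
    exact absurd this (by simp)
  · exact Or.inr hc

lemma maxB (i : Fin (n+k+2)) : IsMaxClique (redGraph n k G) (B n k i) := by
  refine ⟨clique_B i, fun K' hK' hsub => ?_⟩
  refine Finset.Subset.antisymm ?_ hsub
  intro u hu
  rw [mem_B]
  by_cases huy : u = .y i
  · exact Or.inr huy
  have hyi : (RVert.y i : RVert n k) ∈ K' := hsub (by rw [mem_B]; exact Or.inr rfl)
  have hadj : (redGraph n k G).Adj u (.y i) := hK' hu hyi huy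
  exact Or.inl (adj_to_y.mp hadj)

lemma maxD (j : Fin (n+k+2)) : IsMaxClique (redGraph n k G) (D n k G j) := by
  refine ⟨clique_D j, fun K' hK' hsub => ?_⟩
  refine Finset.Subset.antisymm ?_ hsub
  intro u hu
  rw [mem_D]
  by_cases huw : u = .w j
  · exact Or.inl huw
  have hwj : (RVert.w j : RVert n k) ∈ K' := hsub (by rw [mem_D]; exact Or.inl rfl)
  have hadj : (redGraph n k G).Adj u (.w j) := hK' hu hwj huw
  exact Or.inr (adj_to_w.mp hadj)

lemma classify {K : Finset (RVert n k)} (hK : IsMaxClique (redGraph n k G) K) :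
    (∃ i, K = A n k i) ∨ (∃ i, K = B n k i) ∨ (∃ j, K = D n k G j) := by
  by_cases hy : ∃ a, (RVert.y a : RVert n k) ∈ K
  · obtain ⟨a, ha⟩ := hy
    refine Or.inr (Or.inl ⟨a, ?_⟩)
    have hsub : K ⊆ B n k a := by
      intro u hu
      rw [mem_B]
      by_cases huy : u = .y a
      · exact Or.inr huy
      · exact Or.inl (adj_to_y.mp (hK.1 hu ha huy))
    exact (hK.2 (B n k a) (clique_B a) hsub).symm
  by_cases hx : ∃ a, (RVert.x a : RVert n k) ∈ K
  · obtain ⟨a, ha⟩ := hx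
    refine Or.inl ⟨a, ?_⟩
    have hsub : K ⊆ A n k a := by
      intro u hu
      rw [mem_A]
      by_cases hux : u = .x a
      · exact Or.inl hux
      rcases adj_to_x.mp (hK.1 hu ha hux) with rfl | hc
      · exact absurd ⟨a, hu⟩ hy
      · exact Or.inr hc
    exact (hK.2 (A n k a) (clique_A a) hsub).symm
  by_cases hw : ∃ a, (RVert.w a : RVert n k) ∈ K
  · obtain ⟨a, ha⟩ := hw
    refine Or.inr (Or.inr ⟨a, ?_⟩)
    have hsub : K ⊆ D n k G a := by
      intro u hu
      rw [mem_D]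
      by_cases huw : u = .w a
      · exact Or.inl huw
      · exact Or.inr (adj_to_w.mp (hK.1 hu ha huw))
    exact (hK.2 (D n k G a) (clique_D a) hsub).symm
  · -- all vertices are from C
    refine Or.inl ⟨0, ?_⟩
    have hsub : K ⊆ A n k 0 := by
      intro u hu
      rw [mem_A]
      cases u with
      | c i => exact Or.inr ⟨i, rfl⟩
      | w a => exact absurd ⟨a, hu⟩ hw
      | x a => exact absurd ⟨a, hu⟩ hx
      | y a => exact absurd ⟨a, hu⟩ hy
    exact (hK.2 (A n k 0) (clique_A 0) hsub).symm

/-! ### Distinctness -/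

lemma A_ne_B {i j : Fin (n+k+2)} : A n k i ≠ B n k j := by
  intro h
  have : (RVert.c 0 : RVert n k) ∈ B n k j := h ▸ (by rw [mem_A]; exact Or.inr ⟨0, rfl⟩)
  rw [mem_B] at this
  rcases this with h' | h' <;> exact nomatch h'

lemma A_ne_D {i j : Fin (n+k+2)} : A n k i ≠ D n k G j := by
  intro h
  have : (RVert.x i : RVert n k) ∈ D n k G j := h ▸ (by rw [mem_A]; exact Or.inl rfl)
  rw [mem_D] at this
  rcases this with h' | ⟨_, h', _⟩ <;> exact nomatch h'

lemma B_ne_D {i j : Fin (n+k+2)} : B n k i ≠ D n k G j := by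
  intro h
  have : (RVert.y i : RVert n k) ∈ D n k G j := h ▸ (by rw [mem_B]; exact Or.inr rfl)
  rw [mem_D] at this
  rcases this with h' | ⟨_, h', _⟩ <;> exact nomatch h'

lemma A_inj {i j : Fin (n+k+2)} (h : A n k i = A n k j) : i = j := by
  have : (RVert.x i : RVert n k) ∈ A n k j := h ▸ (by rw [mem_A]; exact Or.inl rfl)
  rw [mem_A] at this
  rcases this with h' | ⟨_, h'⟩
  · simpa using h'
  · exact absurd h' (by simp)

lemma B_inj {i j : Fin (n+k+2)} (h : B n k i = B n k j) : i = j := by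
  have : (RVert.x i : RVert n k) ∈ B n k j := h ▸ (by rw [mem_B]; exact Or.inl rfl)
  rw [mem_B] at this
  rcases this with h' | h'
  · injection h'
  · exact nomatch h'

lemma D_inj {i j : Fin (n+k+2)} (h : D n k G i = D n k G j) : i = j := by
  have : (RVert.w i : RVert n k) ∈ D n k G j := h ▸ (by rw [mem_D]; exact Or.inl rfl)
  rw [mem_D] at this
  rcases this with h' | ⟨_, h', _⟩
  · injection h'
  · exact nomatch h'

/-! ### Chordality -/

open Fin.CommRing in
lemma chordal : Chordal (redGraph n k G) := by
  intro m hm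
  constructor
  intro f
  obtain ⟨q, rfl⟩ : ∃ q, m = q + 2 + 2 := ⟨m - 4, by omega⟩
  have hinj : Function.Injective f := f.injective
  have hAdjR : ∀ i : Fin (q+2+2), (cycleGraph (q+2+2)).Adj i (i+1) := by
    intro i
    rw [cycleGraph_adj]; right; ring_nf
  have hAdjL : ∀ i : Fin (q+2+2), (cycleGraph (q+2+2)).Adj i (i-1) := by
    intro i
    rw [cycleGraph_adj]; left; ring_nf
  have hNe : ∀ i : Fin (q+2+2), (i-1) ≠ (i+1) := by
    intro i h
    have h2 : (2 : Fin (q+2+2)) = 0 := by linear_combination -h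
    rw [show ((2 : Fin (q+2+2))) = ((2:ℕ) : Fin (q+2+2)) by norm_cast] at h2
    have h3 := congrArg Fin.val h2
    rw [Fin.val_natCast, Nat.mod_eq_of_lt (by omega)] at h3
    simp at h3
  have hNAdj : ∀ i : Fin (q+2+2), ¬ (cycleGraph (q+2+2)).Adj (i-1) (i+1) := by
    intro i h
    rw [cycleGraph_adj] at h
    rcases h with h | h
    · have h2 : (3 : Fin (q+2+2)) = 0 := by linear_combination -h
      rw [show ((3 : Fin (q+2+2))) = ((3:ℕ) : Fin (q+2+2)) by norm_cast] at h2
      have h3 := congrArg Fin.val h2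
      rw [Fin.val_natCast, Nat.mod_eq_of_lt (by omega)] at h3
      simp at h3
    · have h2 : (1 : Fin (q+2+2)) = 0 := by linear_combination h
      exact one_ne_zero h2
  have hH : ∀ i : Fin (q+2+2), (redGraph n k G).Adj (f (i-1)) (f i) ∧
      (redGraph n k G).Adj (f (i+1)) (f i) := by
    intro i
    exact ⟨(f.map_rel_iff.mpr (hAdjL i)).symm, (f.map_rel_iff.mpr (hAdjR i)).symm⟩
  have hNotCC : ∀ i : Fin (q+2+2),
      ¬ ((∃ a, f (i-1) = .c a) ∧ (∃ b, f (i+1) = .c b)) := by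
    rintro i ⟨⟨a, ha⟩, ⟨b, hb⟩⟩
    have hne : a ≠ b := by
      intro h
      exact hNe i (hinj (by rw [ha, hb, h]))
    have : (redGraph n k G).Adj (f (i-1)) (f (i+1)) := by
      rw [ha, hb]; exact adj_cc.mpr hne
    exact hNAdj i (f.map_rel_iff.mp this)
  have hNoY : ∀ (i : Fin (q+2+2)) a, f i ≠ .y a := by
    intro i a h
    have h1 : f (i-1) = .x a := adj_to_y.mp (h ▸ (hH i).1)
    have h2 : f (i+1) = .x a := adj_to_y.mp (h ▸ (hH i).2)
    exact hNe i (hinj (h1.trans h2.symm))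
  have hNoX : ∀ (i : Fin (q+2+2)) a, f i ≠ .x a := by
    intro i a h
    have h1 := adj_to_x.mp (h ▸ (hH i).1)
    have h2 := adj_to_x.mp (h ▸ (hH i).2)
    rcases h1 with h1 | h1
    · exact hNoY (i-1) a h1
    rcases h2 with h2 | h2
    · exact hNoY (i+1) a h2
    exact hNotCC i ⟨h1, h2⟩
  have hNoW : ∀ (i : Fin (q+2+2)) a, f i ≠ .w a := by
    intro i a h
    obtain ⟨i1, h1, -⟩ := adj_to_w.mp (h ▸ (hH i).1)
    obtain ⟨i2, h2, -⟩ := adj_to_w.mp (h ▸ (hH i).2)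
    exact hNotCC i ⟨⟨i1, h1⟩, ⟨i2, h2⟩⟩
  have hAll : ∀ i : Fin (q+2+2), ∃ a, f i = .c a := by
    intro i
    cases hfi : f i with
    | c a => exact ⟨a, rfl⟩
    | w a => exact absurd hfi (hNoW i a)
    | x a => exact absurd hfi (hNoX i a)
    | y a => exact absurd hfi (hNoY i a)
  exact hNotCC 0 ⟨hAll _, hAll _⟩

end DSR

/-! ### The index type and parent function for the clique tree -/

section Parent

/-- Parent function on the index type of maximal cliques. -/
def dsrParent {N : ℕ} : (Fin N ⊕ Fin N ⊕ Fin N) → (Fin N ⊕ Fin N ⊕ Fin N)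
  | Sum.inl i => if h : i.val = 0 then Sum.inl i else Sum.inl ⟨i.val - 1, by omega⟩
  | Sum.inr (Sum.inl i) => Sum.inl i
  | Sum.inr (Sum.inr i) => Sum.inl i

/-- Rank function on the index type. -/
def dsrRank {N : ℕ} : (Fin N ⊕ Fin N ⊕ Fin N) → ℕ
  | Sum.inl i => i.val
  | Sum.inr _ => N

lemma dsrParent_inl {N : ℕ} (s : Fin N ⊕ Fin N ⊕ Fin N) : ∃ i, dsrParent s = Sum.inl i := by
  rcases s with i | i | i
  · by_cases h : i.val = 0 <;> simp [dsrParent, h]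
  · exact ⟨i, rfl⟩
  · exact ⟨i, rfl⟩

lemma dsrRank_decr {N : ℕ} (s : Fin (N+1) ⊕ Fin (N+1) ⊕ Fin (N+1))
    (h : s ≠ Sum.inl 0) : dsrRank (dsrParent s) < dsrRank s := by
  rcases s with i | i | i
  · have hi : i.val ≠ 0 := by
      intro h0
      exact h (by simp [Fin.ext_iff, h0])
    simp only [dsrParent, dsrRank, dif_neg hi]
    omega
  · simp [dsrParent, dsrRank]; exact Nat.lt_succ_iff.mp i.isLt
  · simp [dsrParent, dsrRank]; exact Nat.lt_succ_iff.mp i.isLt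

lemma dsrParent_root {N : ℕ} : dsrParent (Sum.inl (0 : Fin (N+1))) = Sum.inl 0 := by
  simp [dsrParent]

end Parent

namespace DSR
variable {n k : ℕ} {G : SimpleGraph (Fin n)}

lemma Cset_subset_A (i : Fin (n+k+2)) : Cset n k ⊆ A n k i := Finset.subset_insert _ _

lemma inter_AA {i j : Fin (n+k+2)} (hne : i ≠ j) : A n k i ∩ A n k j ⊆ Cset n k := by
  intro u hu
  rw [Finset.mem_inter, mem_A, mem_A] at hu
  rcases hu.1 with rfl | ⟨a, rfl⟩
  · rcases hu.2 with h | ⟨b, h⟩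
    · injection h with h'; exact absurd h' hne
    · exact absurd h (by simp)
  · exact mem_Cset.mpr ⟨a, rfl⟩

lemma inter_AB {i j : Fin (n+k+2)} (hne : i ≠ j) : A n k i ∩ B n k j ⊆ Cset n k := by
  intro u hu
  rw [Finset.mem_inter, mem_A, mem_B] at hu
  rcases hu.1 with rfl | ⟨a, rfl⟩
  · rcases hu.2 with h | h
    · injection h with h'; exact absurd h' hne
    · exact absurd h (by simp)
  · rcases hu.2 with h | h <;> exact absurd h (by simp)

lemma inter_AD (i j : Fin (n+k+2)) : A n k i ∩ D n k G j ⊆ Cset n k := by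
  intro u hu
  rw [Finset.mem_inter, mem_A, mem_D] at hu
  rcases hu.1 with rfl | ⟨a, rfl⟩
  · rcases hu.2 with h | ⟨b, h, -⟩ <;> exact absurd h (by simp)
  · exact mem_Cset.mpr ⟨a, rfl⟩

lemma inter_BB {i j : Fin (n+k+2)} (hne : i ≠ j) : B n k i ∩ B n k j ⊆ Cset n k := by
  intro u hu
  rw [Finset.mem_inter, mem_B, mem_B] at hu
  rcases hu.1 with rfl | rfl <;> rcases hu.2 with h | h <;>
    first
      | (injection h with h'; exact absurd h' hne)
      | exact absurd h (by simp)

lemma inter_BD (i j : Fin (n+k+2)) : B n k i ∩ D n k G j ⊆ Cset n k := by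
  intro u hu
  rw [Finset.mem_inter, mem_B, mem_D] at hu
  rcases hu.1 with rfl | rfl <;> rcases hu.2 with h | ⟨b, h, -⟩ <;> exact absurd h (by simp)

lemma inter_DD {i j : Fin (n+k+2)} (hne : i ≠ j) : D n k G i ∩ D n k G j ⊆ Cset n k := by
  intro u hu
  rw [Finset.mem_inter, mem_D, mem_D] at hu
  rcases hu.1 with rfl | ⟨a, rfl, -⟩
  · rcases hu.2 with h | ⟨b, h, -⟩
    · injection h with h'; exact absurd h' hne
    · exact absurd h (by simp)
  · exact mem_Cset.mpr ⟨a, rfl⟩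

end DSR
theorem dominatingSetReduction_chordal_cliqueTree_degree_le_four
    (n k : ℕ) (hn : 1 ≤ n) (hk1 : 1 ≤ k) (hkn : k ≤ n) (G : SimpleGraph (Fin n)) :
    Chordal (redGraph n k G) ∧
    ∃ T : SimpleGraph {K : Finset (RVert n k) // IsMaxClique (redGraph n k G) K},
      T.IsTree ∧ CliqueIntersectionProperty (redGraph n k G) T ∧
      ∀ K, (T.neighborSet K).ncard ≤ 4 := by
  classical
  refine ⟨DSR.chordal, ?_⟩
  -- the classification equivalence
  let MC := {K : Finset (RVert n k) // IsMaxClique (redGraph n k G) K}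
  let cl : (Fin (n+k+2) ⊕ Fin (n+k+2) ⊕ Fin (n+k+2)) → MC := fun s =>
    match s with
    | Sum.inl i => ⟨DSR.A n k i, DSR.maxA i⟩
    | Sum.inr (Sum.inl i) => ⟨DSR.B n k i, DSR.maxB i⟩
    | Sum.inr (Sum.inr j) => ⟨DSR.D n k G j, DSR.maxD j⟩
  have hcl_inj : Function.Injective cl := by
    rintro (i | i | i) (j | j | j) h <;>
      have h' := congrArg Subtype.val h
    · exact congrArg Sum.inl (DSR.A_inj h')
    · exact absurd h' DSR.A_ne_B
    · exact absurd h' DSR.A_ne_D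
    · exact absurd (Eq.symm h') DSR.A_ne_B
    · exact congrArg (Sum.inr ∘ Sum.inl) (DSR.B_inj h')
    · exact absurd h' DSR.B_ne_D
    · exact absurd (Eq.symm h') DSR.A_ne_D
    · exact absurd (Eq.symm h') DSR.B_ne_D
    · exact congrArg (Sum.inr ∘ Sum.inr) (DSR.D_inj h')
  have hcl_surj : Function.Surjective cl := by
    rintro ⟨K, hK⟩
    rcases DSR.classify hK with ⟨i, rfl⟩ | ⟨i, rfl⟩ | ⟨j, rfl⟩
    · exact ⟨Sum.inl i, rfl⟩
    · exact ⟨Sum.inr (Sum.inl i), rfl⟩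
    · exact ⟨Sum.inr (Sum.inr j), rfl⟩
  let e := Equiv.ofBijective cl ⟨hcl_inj, hcl_surj⟩
  have he : ∀ s, e s = cl s := fun s => rfl
  let pT : MC → MC := fun K => e (dsrParent (e.symm K))
  let rT : MC → ℕ := fun K => dsrRank (e.symm K)
  have hpT_root : pT (e (Sum.inl 0)) = e (Sum.inl 0) := by
    show e (dsrParent (e.symm (e (Sum.inl 0)))) = e (Sum.inl 0)
    rw [Equiv.symm_apply_apply]
    exact congrArg e (dsrParent_root (N := n + k + 1))
  have hpT_decr : ∀ v, v ≠ e (Sum.inl 0) → rT (pT v) < rT v := by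
    intro v hv
    have hs : e.symm v ≠ Sum.inl 0 := by
      intro h
      apply hv
      rw [← e.apply_symm_apply v, h]
    have := dsrRank_decr (N := n + k + 1) (e.symm v) hs
    show dsrRank (e.symm (e (dsrParent (e.symm v)))) < dsrRank (e.symm v)
    rwa [Equiv.symm_apply_apply]
  -- basic facts about the parent graph T
  set T : SimpleGraph MC := parentGraph pT with hT
  have hOnly : ∀ (M : MC), (∃ t, e.symm M = Sum.inr t) → ∀ z, T.Adj M z → z = pT M := by
    rintro M ⟨t, ht⟩ z hz
    rw [hT, parentGraph_adj] at hz
    rcases hz.2 with h | h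
    · exact h.symm
    · exfalso
      have h2 : dsrParent (e.symm z) = e.symm M := by
        have := congrArg e.symm h
        rwa [Equiv.symm_apply_apply] at this
      rw [ht] at h2
      obtain ⟨i, hi⟩ := dsrParent_inl (e.symm z)
      rw [hi] at h2
      exact nomatch h2
  refine ⟨T, parentGraph_isTree pT (e (Sum.inl 0)) rT hpT_root hpT_decr, ?_, ?_⟩
  · -- clique-intersection property
    intro K K' p hp L hL
    by_cases hKK : K = K'
    · subst hKK
      have hnil : p = SimpleGraph.Walk.nil := (SimpleGraph.Walk.isPath_iff_eq_nil (p := p)).mp hp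
      subst hnil
      simp only [SimpleGraph.Walk.support_nil, List.mem_singleton] at hL
      subst hL
      exact Finset.inter_subset_left
    -- value lemmas
    have hval : ∀ (M : MC) i, e.symm M = Sum.inl i → M.1 = DSR.A n k i := by
      intro M i h
      have : M = e (Sum.inl i) := by rw [← h, e.apply_symm_apply]
      rw [this]; rfl
    have hvalB : ∀ (M : MC) i, e.symm M = Sum.inr (Sum.inl i) → M.1 = DSR.B n k i := by
      intro M i h
      have : M = e (Sum.inr (Sum.inl i)) := by rw [← h, e.apply_symm_apply]
      rw [this]; rfl
    have hvalD : ∀ (M : MC) i, e.symm M = Sum.inr (Sum.inr i) → M.1 = DSR.D n k G i := by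
      intro M i h
      have : M = e (Sum.inr (Sum.inr i)) := by rw [← h, e.apply_symm_apply]
      rw [this]; rfl
    -- the special case: K, K' are the pair A i / B i
    by_cases hAB : ∃ i, (e.symm K = Sum.inl i ∧ e.symm K' = Sum.inr (Sum.inl i)) ∨
        (e.symm K' = Sum.inl i ∧ e.symm K = Sum.inr (Sum.inl i))
    · obtain ⟨i, hcase | hcase⟩ := hAB
      · have hleaf : ∀ u, T.Adj K' u → u = K := by
          intro u hu
          rw [hOnly K' ⟨Sum.inl i, hcase.2⟩ u hu]
          show e (dsrParent (e.symm K')) = K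
          rw [hcase.2]
          show e (Sum.inl i) = K
          rw [← hcase.1, e.apply_symm_apply]
        rcases path_to_adj_leaf p hp hKK hleaf L hL with rfl | rfl
        · exact Finset.inter_subset_left
        · exact Finset.inter_subset_right
      · have hleaf : ∀ u, T.Adj K u → u = K' := by
          intro u hu
          rw [hOnly K ⟨Sum.inl i, hcase.2⟩ u hu]
          show e (dsrParent (e.symm K)) = K'
          rw [hcase.2]
          show e (Sum.inl i) = K'
          rw [← hcase.1, e.apply_symm_apply]
        have hL' : L ∈ p.reverse.support := by
          rw [SimpleGraph.Walk.support_reverse, List.mem_reverse]; exact hL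
        rcases path_to_adj_leaf p.reverse hp.reverse (Ne.symm hKK) hleaf L hL' with rfl | rfl
        · exact Finset.inter_subset_right
        · exact Finset.inter_subset_left
    · -- general case: the intersection is inside Cset
      have hsub : K.1 ∩ K'.1 ⊆ DSR.Cset n k := by
        have hne : e.symm K ≠ e.symm K' := fun h => hKK (e.symm.injective h)
        rcases hsK : e.symm K with i | i | i <;> rcases hsK' : e.symm K' with j | j | j
        · rw [hval K i hsK, hval K' j hsK']
          exact DSR.inter_AA (by rintro rfl; exact hne (hsK.trans hsK'.symm))
        · rw [hval K i hsK, hvalB K' j hsK']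
          refine DSR.inter_AB ?_
          rintro rfl
          exact hAB ⟨_, Or.inl ⟨hsK, hsK'⟩⟩
        · rw [hval K i hsK, hvalD K' j hsK']
          exact DSR.inter_AD i j
        · rw [hvalB K i hsK, hval K' j hsK']
          rw [Finset.inter_comm]
          refine DSR.inter_AB ?_
          rintro rfl
          exact hAB ⟨_, Or.inr ⟨hsK', hsK⟩⟩
        · rw [hvalB K i hsK, hvalB K' j hsK']
          exact DSR.inter_BB (by rintro rfl; exact hne (hsK.trans hsK'.symm))
        · rw [hvalB K i hsK, hvalD K' j hsK']
          exact DSR.inter_BD i j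
        · rw [hvalD K i hsK, hval K' j hsK']
          rw [Finset.inter_comm]
          exact DSR.inter_AD j i
        · rw [hvalD K i hsK, hvalB K' j hsK']
          rw [Finset.inter_comm]
          exact DSR.inter_BD j i
        · rw [hvalD K i hsK, hvalD K' j hsK']
          exact DSR.inter_DD (by rintro rfl; exact hne (hsK.trans hsK'.symm))
      by_cases hLK : L = K
      · subst hLK; exact Finset.inter_subset_left
      by_cases hLK' : L = K'
      · subst hLK'; exact Finset.inter_subset_right
      -- L is an interior vertex, hence not a leaf, hence of type A
      have hnotleaf : ¬ (∀ u u', T.Adj L u → T.Adj L u' → u = u') := by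
        intro hlf
        rcases leaf_mem_path_support p hp hL hlf with h | h
        · exact hLK h
        · exact hLK' h
      rcases hsL : e.symm L with m | t
      · rw [hval L m hsL]
        exact hsub.trans (DSR.Cset_subset_A m)
      · exfalso
        apply hnotleaf
        intro u u' hu hu'
        rw [hOnly L ⟨t, hsL⟩ u hu, hOnly L ⟨t, hsL⟩ u' hu']
  · -- degree bound
    intro K
    rcases hsK : e.symm K with i | t
    · have hsub : T.neighborSet K ⊆
          {pT K, e (Sum.inl (i+1)), e (Sum.inr (Sum.inl i)), e (Sum.inr (Sum.inr i))} := by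
        intro u hu
        rw [SimpleGraph.mem_neighborSet, hT, parentGraph_adj] at hu
        rcases hu.2 with h | h
        · exact Or.inl h.symm
        · have hd : dsrParent (e.symm u) = Sum.inl i := by
            have h2 := congrArg e.symm h
            rw [Equiv.symm_apply_apply, hsK] at h2
            exact h2
          rcases hsu : e.symm u with j | j | j
          · rw [hsu] at hd
            by_cases hj : j.val = 0
            · exfalso
              rw [dsrParent, dif_pos hj] at hd
              apply hu.1
              rw [← e.apply_symm_apply K, hsK, ← hd, ← hsu, e.apply_symm_apply]
            · rw [dsrParent, dif_neg hj] at hd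
              have hd' : j.val - 1 = i.val := by
                have := congrArg (fun s => Sum.elim Fin.val (fun _ => 0) s) hd
                simpa using this
              have hji : j = i + 1 := by
                rw [Fin.ext_iff, Fin.val_add, Fin.val_one]
                have hlt : i.val + 1 < n + k + 2 := by
                  have := j.isLt; omega
                rw [Nat.mod_eq_of_lt hlt]
                omega
              right; left
              rw [← e.apply_symm_apply u, hsu, hji]
          · rw [hsu] at hd
            have hji : j = i := by
              have h3 := congrArg (fun s => Sum.elim Fin.val (fun _ => 0) s) hd
              simp [dsrParent] at h3
              exact Fin.ext h3
            right; right; left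
            rw [← e.apply_symm_apply u, hsu, hji]
          · rw [hsu] at hd
            have hji : j = i := by
              have h3 := congrArg (fun s => Sum.elim Fin.val (fun _ => 0) s) hd
              simp [dsrParent] at h3
              exact Fin.ext h3
            right; right; right
            rw [← e.apply_symm_apply u, hsu, hji]
            exact rfl
      have hfin : ({pT K, e (Sum.inl (i+1)), e (Sum.inr (Sum.inl i)),
          e (Sum.inr (Sum.inr i))} : Set MC).Finite :=
        (Set.finite_singleton _).insert _ |>.insert _ |>.insert _
      calc (T.neighborSet K).ncard
          ≤ ({pT K, e (Sum.inl (i+1)), e (Sum.inr (Sum.inl i)),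
              e (Sum.inr (Sum.inr i))} : Set MC).ncard := Set.ncard_le_ncard hsub hfin
        _ ≤ ({e (Sum.inl (i+1)), e (Sum.inr (Sum.inl i)),
              e (Sum.inr (Sum.inr i))} : Set MC).ncard + 1 := Set.ncard_insert_le _ _
        _ ≤ (({e (Sum.inr (Sum.inl i)), e (Sum.inr (Sum.inr i))} : Set MC).ncard + 1) + 1 := by
            exact Nat.add_le_add_right (Set.ncard_insert_le _ _) 1
        _ ≤ ((({e (Sum.inr (Sum.inr i))} : Set MC).ncard + 1) + 1) + 1 := by
            exact Nat.add_le_add_right (Nat.add_le_add_right (Set.ncard_insert_le _ _) 1) 1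
        _ ≤ 4 := by rw [Set.ncard_singleton]
    · have hsub : T.neighborSet K ⊆ {pT K} := by
        intro u hu
        rw [SimpleGraph.mem_neighborSet] at hu
        exact hOnly K ⟨t, hsK⟩ u hu
      calc (T.neighborSet K).ncard
          ≤ ({pT K} : Set MC).ncard := Set.ncard_le_ncard hsub (Set.finite_singleton _)
        _ = 1 := Set.ncard_singleton _
        _ ≤ 4 := by omega
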